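/- Let X be a real Banach space, F a norming subspace of X*, and σ the σ(X,F) topology. Let K ⊆ X be a σ-closed, norm-bounded, convex set, and for λ > 0 let K_λ denote the σ-closure of K + λB(X), where B(X) is the closed unit ball of X. If K_λ is admissible for every λ > 0, then K is admissible. -/

import Mathlib

open Metric Set Pointwise

/-- A set is admissible if it is the intersection of all closed balls containing it. -/
def Admissible {X : Type*} [NormedAddCommGroup X] (K : Set X) : Prop :=
  K = ⋂ p ∈ {p : X × ℝ | K ⊆ closedBall p.1 p.2}, closedBall p.1 p.2

/-- The `σ(X,F)` topology on `X`: the topology induced by the functionals in `F`. -/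
def sigmaTop {X : Type*} [NormedAddCommGroup X] [NormedSpace ℝ X]
    (F : Submodule ℝ (X →L[ℝ] ℝ)) : TopologicalSpace X :=
  TopologicalSpace.induced (fun x => fun f : F => (f : X →L[ℝ] ℝ) x) inferInstance

/-- `F` is a norming subspace of `X*`: `‖x‖ = sup {|f x| : f ∈ F, ‖f‖ ≤ 1}`. -/
def IsNorming {X : Type*} [NormedAddCommGroup X] [NormedSpace ℝ X]
    (F : Submodule ℝ (X →L[ℝ] ℝ)) : Prop :=
  ∀ x : X, ‖x‖ = sSup {r : ℝ | ∃ f ∈ F, ‖f‖ ≤ 1 ∧ r = |f x|}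

/-- The canonical pairing `X × F → ℝ` as a bilinear map. -/
def pairingB {X : Type*} [NormedAddCommGroup X] [NormedSpace ℝ X]
    (F : Submodule ℝ (X →L[ℝ] ℝ)) : X →ₗ[ℝ] F →ₗ[ℝ] ℝ where
  toFun x :=
    { toFun := fun f : F => (f : X →L[ℝ] ℝ) x
      map_add' := fun f g => rfl
      map_smul' := fun c f => rfl }
  map_add' x y := by ext f; simp
  map_smul' c x := by ext f; simp

set_option maxHeartbeats 1000000 in
/-- Lemma 1 (Lemma IntMIP): if `K_λ` (the σ-closure of `K + λ B(X)`) is admissible for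
every `λ > 0`, then the σ-closed bounded convex set `K` is admissible. -/
theorem stmt_0 {X : Type*} [NormedAddCommGroup X] [NormedSpace ℝ X] [CompleteSpace X]
    (F : Submodule ℝ (X →L[ℝ] ℝ)) (hF : IsNorming F)
    (K : Set X) (hKc : @IsClosed X (sigmaTop F) K)
    (hKb : Bornology.IsBounded K) (hKconv : Convex ℝ K)
    (h : ∀ l : ℝ, 0 < l → Admissible (@closure X (sigmaTop F) (K + closedBall (0 : X) l))) :
    Admissible K := by
  classical
  set B : X →ₗ[ℝ] F →ₗ[ℝ] ℝ := pairingB F with hBdef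
  have hsub : K ⊆ ⋂ p ∈ {p : X × ℝ | K ⊆ closedBall p.1 p.2}, closedBall p.1 p.2 := by
    intro x hx
    simp only [mem_iInter, mem_setOf_eq]
    exact fun p hp => hp hx
  refine subset_antisymm hsub ?_
  intro x hx
  by_contra hxK
  -- separation in the weak topology
  have hKc' : @IsClosed (WeakBilin B) (WeakBilin.instTopologicalSpace B) K := hKc
  have hKconv' : Convex ℝ (show Set (WeakBilin B) from K) := hKconv
  haveI : IsTopologicalAddGroup (WeakBilin B) := @WeakBilin.instIsTopologicalAddGroup ℝ X F _ _ _ _ _ _ B _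
  haveI : LocallyConvexSpace ℝ (WeakBilin B) := @WeakBilin.locallyConvexSpace ℝ X F _ _ _ _ _ _ _ _ B
  obtain ⟨f, u, hfu, hux⟩ :=
    geometric_hahn_banach_closed_point (E := WeakBilin B) (x := x) hKconv' hKc' hxK
  -- f is also norm-continuous
  have hle : (inferInstance : TopologicalSpace X) ≤ sigmaTop F := by
    rw [sigmaTop]
    exact continuous_iff_le_induced.mp
      (continuous_pi fun g : F => (g : X →L[ℝ] ℝ).continuous)
  have hfsc : @Continuous X ℝ (sigmaTop F) _ f := f.continuous
  have hfc : @Continuous X ℝ _ _ f := continuous_le_dom hle hfsc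
  let f' : X →L[ℝ] ℝ := ⟨f.toLinearMap, hfc⟩
  set ε := f x - u with hε
  have hεpos : 0 < ε := by simp only [hε]; linarith
  set M := ‖f'‖ + 1 with hM
  have hMpos : 0 < M := by positivity
  set l := ε / (2 * M) with hl
  have hlpos : 0 < l := by positivity
  set c := u + l * M with hc
  have hlM : l * M = ε / 2 := by rw [hl]; field_simp
  have hcx : c < f x := by rw [hc, hlM]; simp only [hε]; linarith
  -- the halfspace
  have hKl : K + closedBall (0 : X) l ⊆ {y : X | f y ≤ c} := by
    rintro _ ⟨a, ha, b, hb, rfl⟩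
    have h1 : f a < u := hfu a ha
    have h2 : |f b| ≤ ‖f'‖ * l := by
      calc |f b| = ‖f' b‖ := rfl
        _ ≤ ‖f'‖ * ‖b‖ := f'.le_opNorm b
        _ ≤ ‖f'‖ * l :=
            mul_le_mul_of_nonneg_left (mem_closedBall_zero_iff.mp hb) (norm_nonneg _)
    have hfb : f b ≤ ‖f'‖ * l := (abs_le.mp h2).2
    have hmul : ‖f'‖ * l ≤ M * l := by
      apply mul_le_mul_of_nonneg_right _ hlpos.le
      rw [hM]; linarith
    have hadd : f (a + b) = f a + f b := map_add f a b
    simp only [mem_setOf_eq]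
    rw [hadd, hc]
    have hcomm : M * l = l * M := mul_comm _ _
    linarith
  have hSclosed : IsClosed {y : WeakBilin B | f y ≤ c} :=
    isClosed_le f.continuous continuous_const
  have hclsub : @closure X (sigmaTop F) (K + closedBall (0 : X) l) ⊆ {y : X | f y ≤ c} := by
    have : closure (show Set (WeakBilin B) from K + closedBall (0 : X) l) ⊆
        {y : WeakBilin B | f y ≤ c} := closure_minimal hKl hSclosed
    exact this
  -- x belongs to K_l by admissibility
  have hKsubKl : K ⊆ @closure X (sigmaTop F) (K + closedBall (0 : X) l) := by
    intro a ha
    have hmem : a + 0 ∈ K + closedBall (0 : X) l :=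
      add_mem_add ha (mem_closedBall_self hlpos.le)
    rw [add_zero] at hmem
    exact @subset_closure (WeakBilin B) _ (K + closedBall (0 : X) l) a hmem
  have hxKl : x ∈ @closure X (sigmaTop F) (K + closedBall (0 : X) l) := by
    have hadm := h l hlpos
    rw [hadm]
    simp only [mem_iInter, mem_setOf_eq]
    intro p hp
    simp only [mem_iInter, mem_setOf_eq] at hx
    exact hx p (hKsubKl.trans hp)
  have hfin := hclsub hxKl
  simp only [mem_setOf_eq] at hfin
  linarith
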